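/- The Mills' ratio M(y) = y · Φ̄(y) / φ(y) is monotonically increasing on (0, ∞), tends to 0 as y → 0⁺, and tends to 1 as y → ∞. -/

import Mathlib

open MeasureTheory Set

/-- Standard Gaussian density. -/
noncomputable def gphi (v : ℝ) : ℝ := (Real.sqrt (2 * Real.pi))⁻¹ * Real.exp (-v ^ 2 / 2)

/-- Standard Gaussian upper tail probability. -/
noncomputable def PhiBar (v : ℝ) : ℝ := ∫ x in Set.Ioi v, gphi x

/-- Standard Gaussian CDF. -/
noncomputable def Phi (v : ℝ) : ℝ := ∫ x in Set.Iic v, gphi x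

lemma gphi_pos (v : ℝ) : 0 < gphi v := by
  unfold gphi; positivity

lemma gphi_cont : Continuous gphi := by
  unfold gphi; continuity

lemma hasDerivAt_gphi (y : ℝ) : HasDerivAt gphi (-y * gphi y) y := by
  unfold gphi
  have h : HasDerivAt (fun v : ℝ => -v ^ 2 / 2) (-y) y := by
    have := ((hasDerivAt_pow 2 y).neg).div_const 2
    simpa using this.congr_deriv (by ring)
  have := (h.exp).const_mul (Real.sqrt (2 * Real.pi))⁻¹
  exact this.congr_deriv (by ring)

lemma gphi_tendsto : Filter.Tendsto gphi Filter.atTop (nhds 0) := by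
  unfold gphi
  rw [show (0:ℝ) = (Real.sqrt (2 * Real.pi))⁻¹ * 0 by ring]
  apply Filter.Tendsto.const_mul
  apply Real.tendsto_exp_atBot.comp
  have h : Filter.Tendsto (fun v : ℝ => v ^ 2 / 2) Filter.atTop Filter.atTop :=
    (Filter.tendsto_pow_atTop (by norm_num)).atTop_div_const (by norm_num)
  have h2 := Filter.tendsto_neg_atBot_iff.mpr h
  exact h2.congr (fun x => by ring)

lemma integrable_gphi : Integrable gphi := by
  have h := integrable_exp_neg_mul_sq (b := 1/2) (by norm_num)
  have : Integrable (fun x : ℝ => Real.exp (-x ^ 2 / 2)) := by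
    convert h using 2 with x; ring_nf
  exact this.const_mul _

/-- ∫_y^∞ x φ(x) dx = φ(y) for y ≥ 0 (also integrable). -/
lemma integral_id_mul_gphi {y : ℝ} (hy : 0 ≤ y) :
    (∫ x in Set.Ioi y, x * gphi x) = gphi y ∧ IntegrableOn (fun x => x * gphi x) (Set.Ioi y) := by
  have hderiv : ∀ x ∈ Set.Ici y, HasDerivAt (fun v => -gphi v) (x * gphi x) x := by
    intro x _
    exact (hasDerivAt_gphi x).neg.congr_deriv (by ring)
  have hpos : ∀ x ∈ Set.Ioi y, 0 ≤ x * gphi x := fun x hx =>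
    mul_nonneg (le_trans hy (le_of_lt hx)) (gphi_pos x).le
  have htend : Filter.Tendsto (fun v => -gphi v) Filter.atTop (nhds 0) := by
    simpa using gphi_tendsto.neg
  constructor
  · have := integral_Ioi_of_hasDerivAt_of_nonneg' hderiv hpos htend
    simpa using this
  · exact integrableOn_Ioi_deriv_of_nonneg' hderiv hpos htend

/-- ∫_y^∞ (1 + x⁻²) φ(x) dx = φ(y)/y for y > 0 (also integrable). -/
lemma integral_one_add_inv_sq_mul_gphi {y : ℝ} (hy : 0 < y) :
    (∫ x in Set.Ioi y, (1 + x⁻¹ ^ 2) * gphi x) = gphi y / y ∧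
      IntegrableOn (fun x => (1 + x⁻¹ ^ 2) * gphi x) (Set.Ioi y) := by
  have hderiv : ∀ x ∈ Set.Ici y, HasDerivAt (fun v => -(gphi v / v)) ((1 + x⁻¹ ^ 2) * gphi x) x := by
    intro x hx
    have hx0 : x ≠ 0 := (lt_of_lt_of_le hy hx).ne'
    have := ((hasDerivAt_gphi x).div (hasDerivAt_id x) hx0).neg
    apply this.congr_deriv
    simp only [id]
    field_simp
    ring
  have hpos : ∀ x ∈ Set.Ioi y, 0 ≤ (1 + x⁻¹ ^ 2) * gphi x := fun x _ =>
    mul_nonneg (by positivity) (gphi_pos x).le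
  have htend : Filter.Tendsto (fun v => -(gphi v / v)) Filter.atTop (nhds 0) := by
    have : Filter.Tendsto (fun v => gphi v / v) Filter.atTop (nhds 0) := by
      have h1 : Filter.Tendsto (fun v : ℝ => v⁻¹) Filter.atTop (nhds 0) := tendsto_inv_atTop_zero
      have := gphi_tendsto.mul h1
      simpa [div_eq_mul_inv] using this
    simpa using this.neg
  constructor
  · have := integral_Ioi_of_hasDerivAt_of_nonneg' hderiv hpos htend
    simpa using this
  · exact integrableOn_Ioi_deriv_of_nonneg' hderiv hpos htend

lemma PhiBar_eq (b : ℝ) : PhiBar b = PhiBar 0 - ∫ x in (0:ℝ)..b, gphi x := by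
  have key : ∀ a c : ℝ, a ≤ c → PhiBar a = (∫ x in Set.Ioc a c, gphi x) + PhiBar c := by
    intro a c hac
    unfold PhiBar
    rw [← Set.Ioc_union_Ioi_eq_Ioi hac,
      setIntegral_union (Set.Ioc_disjoint_Ioi le_rfl) measurableSet_Ioi
        integrable_gphi.integrableOn integrable_gphi.integrableOn]
  rcases le_total 0 b with h | h
  · rw [intervalIntegral.integral_of_le h, key 0 b h]; ring
  · rw [intervalIntegral.integral_of_ge h, key b 0 h]
    simp [intervalIntegral.integral_of_le h]
    ring

lemma hasDerivAt_PhiBar (y : ℝ) : HasDerivAt PhiBar (-gphi y) y := by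
  have h : HasDerivAt (fun b => ∫ x in (0:ℝ)..b, gphi x) (gphi y) y :=
    intervalIntegral.integral_hasDerivAt_right
      (gphi_cont.intervalIntegrable 0 y)
      (gphi_cont.stronglyMeasurableAtFilter _ _)
      gphi_cont.continuousAt
  have := (hasDerivAt_const y (PhiBar 0)).sub h
  simp only [zero_sub] at this
  exact (this.congr_deriv rfl).congr_of_eventuallyEq
    (Filter.Eventually.of_forall fun b => (PhiBar_eq b))

lemma PhiBar_cont : Continuous PhiBar :=
  continuous_iff_continuousAt.mpr fun y => (hasDerivAt_PhiBar y).continuousAt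

/-- Upper Mills bound: y Φ̄(y) ≤ φ(y) for y > 0. -/
lemma mills_upper {y : ℝ} (hy : 0 < y) : y * PhiBar y ≤ gphi y := by
  obtain ⟨hint, hintg⟩ := integral_id_mul_gphi hy.le
  rw [← hint]
  unfold PhiBar
  rw [← integral_const_mul]
  apply setIntegral_mono_on (integrable_gphi.integrableOn.const_mul _) hintg measurableSet_Ioi
  intro x hx
  exact mul_le_mul_of_nonneg_right (le_of_lt hx) (gphi_pos x).le

/-- Lower Mills bound, strict: y φ(y) < (1 + y²) Φ̄(y) for y > 0. -/
lemma mills_lower {y : ℝ} (hy : 0 < y) : y * gphi y < (1 + y ^ 2) * PhiBar y := by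
  obtain ⟨hint, hintg⟩ := integral_one_add_inv_sq_mul_gphi hy
  have hptws : ∀ x ∈ Set.Ioi y,
      0 < (1 + y⁻¹ ^ 2) * gphi x - (1 + x⁻¹ ^ 2) * gphi x := by
    intro x hx
    have hxy : y < x := hx
    have hinv : x⁻¹ < y⁻¹ := inv_strictAnti₀ hy hxy
    have hinv2 : x⁻¹ ^ 2 < y⁻¹ ^ 2 :=
      pow_lt_pow_left₀ hinv (inv_nonneg.mpr (hy.trans hxy).le) two_ne_zero
    nlinarith [gphi_pos x]
  have key : gphi y / y < (1 + y⁻¹ ^ 2) * PhiBar y := by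
    rw [← hint]
    unfold PhiBar
    rw [← integral_const_mul]
    have hdiff : (0:ℝ) < ∫ x in Set.Ioi y,
        ((1 + y⁻¹ ^ 2) * gphi x - (1 + x⁻¹ ^ 2) * gphi x) := by
      rw [setIntegral_pos_iff_support_of_nonneg_ae]
      · refine lt_of_lt_of_le ?_ (measure_mono (fun x hx => ⟨(hptws x hx).ne', hx⟩))
        simp [Real.volume_Ioi]
      · filter_upwards [ae_restrict_mem measurableSet_Ioi] with x hx
        exact (hptws x hx).le
      · exact (integrable_gphi.integrableOn.const_mul _).sub hintg
    have := integral_sub (integrable_gphi.integrableOn.const_mul ((1:ℝ) + y⁻¹ ^ 2)) hintg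
    rw [this] at hdiff
    linarith
  have h2 := (mul_lt_mul_iff_right₀ (show (0:ℝ) < y ^ 2 by positivity)).mpr key
  have e1 : y ^ 2 * (gphi y / y) = y * gphi y := by field_simp
  have hc : y ^ 2 * y⁻¹ ^ 2 = 1 := by
    rw [← mul_pow, mul_inv_cancel₀ hy.ne', one_pow]
  have e2 : y ^ 2 * ((1 + y⁻¹ ^ 2) * PhiBar y) = (1 + y ^ 2) * PhiBar y := by
    calc y ^ 2 * ((1 + y⁻¹ ^ 2) * PhiBar y)
        = (y ^ 2 + y ^ 2 * y⁻¹ ^ 2) * PhiBar y := by ring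
      _ = (1 + y ^ 2) * PhiBar y := by rw [hc]; ring
  rw [e1, e2] at h2
  exact h2

theorem stmt1 :
    StrictMonoOn (fun y : ℝ => y * PhiBar y / gphi y) (Set.Ioi 0) ∧
    Filter.Tendsto (fun y : ℝ => y * PhiBar y / gphi y) (nhdsWithin 0 (Set.Ioi 0)) (nhds 0) ∧
    Filter.Tendsto (fun y : ℝ => y * PhiBar y / gphi y) Filter.atTop (nhds 1) := by
  set M := fun y : ℝ => y * PhiBar y / gphi y with hM
  have hMderiv : ∀ y : ℝ, 0 < y → HasDerivAt M
      (((1 + y ^ 2) * PhiBar y - y * gphi y) / gphi y) y := by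
    intro y hy
    have h1 : HasDerivAt (fun y : ℝ => y * PhiBar y) (PhiBar y + y * -gphi y) y := by
      exact ((hasDerivAt_id' y).mul (hasDerivAt_PhiBar y)).congr_deriv (by ring)
    have := h1.div (hasDerivAt_gphi y) (gphi_pos y).ne'
    apply this.congr_deriv
    have hg := (gphi_pos y).ne'
    field_simp
    ring
  refine ⟨?_, ?_, ?_⟩
  · apply strictMonoOn_of_deriv_pos (convex_Ioi 0)
    · intro y hy
      exact ((hMderiv y hy).differentiableAt.continuousAt).continuousWithinAt
    · intro y hy
      rw [interior_Ioi] at hy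
      rw [(hMderiv y hy).deriv]
      exact div_pos (by linarith [mills_lower hy]) (gphi_pos y)
  · have : Filter.Tendsto M (nhdsWithin 0 (Set.Ioi 0)) (nhds (0 * PhiBar 0 / gphi 0)) := by
      apply Filter.Tendsto.mono_left _ nhdsWithin_le_nhds
      exact ((continuous_id.mul PhiBar_cont).div gphi_cont fun x => (gphi_pos x).ne').tendsto 0
    simpa using this
  · have htop : Filter.Tendsto (fun y : ℝ => 1 + y ^ 2) Filter.atTop Filter.atTop :=
      Filter.tendsto_atTop_add_const_left _ 1 (Filter.tendsto_pow_atTop two_ne_zero)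
    have hsq : Filter.Tendsto (fun y : ℝ => y ^ 2 / (1 + y ^ 2)) Filter.atTop (nhds 1) := by
      have h0 : Filter.Tendsto (fun y : ℝ => 1 - (1 + y ^ 2)⁻¹) Filter.atTop (nhds (1 - 0)) :=
        Filter.Tendsto.const_sub _ (tendsto_inv_atTop_zero.comp htop)
      rw [sub_zero] at h0
      apply h0.congr
      intro y
      have : (0:ℝ) < 1 + y ^ 2 := by positivity
      field_simp
      ring
    apply tendsto_of_tendsto_of_tendsto_of_le_of_le' hsq tendsto_const_nhds
    · filter_upwards [Filter.eventually_gt_atTop 0] with y hy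
      rw [hM]
      rw [div_le_div_iff₀ (by positivity) (gphi_pos y)]
      have := mul_lt_mul_of_pos_left (mills_lower hy) hy
      nlinarith
    · filter_upwards [Filter.eventually_gt_atTop 0] with y hy
      exact div_le_one_of_le₀ (mills_upper hy) (gphi_pos y).le
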